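/- Let l ≥ 1 be an integer. Assume B ⊂ X is measurable with ν(B) = ν₀ > 0, the measurable set P satisfies P ⊂ B × Y, and there is σ₀ > 0 such that σ_x(P(x)) > σ₀ for ν-a.e. x ∈ B, where P(x) = {y ∈ Y : (x,y) ∈ P}. For n ≥ 1 set P_n^l(x) = {y ∈ P(x) : n_l(x,y) ≥ n}, and define N_l(x) = sup{n ∈ ℕ : σ_x(P_n^l(x)) > σ₀} (with sup ∅ = 0). Then N_l(x) is finite for ν-a.e. x ∈ B, N_l is ν-integrable on B, and ∫_B N_l dν < l/σ₀. -/

import Mathlib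

open MeasureTheory
open scoped ENNReal

lemma aux_le_nth_iff (p : ℕ → Prop) [DecidablePred p] {i n : ℕ} (hn : 1 ≤ n) :
    n ≤ Nat.nth p i ↔ Nat.count p n ≤ i ∧ ∃ m, i < Nat.count p m := by
  constructor
  · intro h
    refine ⟨Nat.le_nth_of_count_le h, ?_⟩
    have hne : Nat.nth p i ≠ 0 := by omega
    have hcard : ∀ hf : (setOf p).Finite, i < hf.toFinset.card :=
      fun hf => Nat.lt_card_toFinset_of_nth_ne_zero hne hf
    exact ⟨Nat.nth p i + 1, by rw [Nat.count_nth_succ hcard]; omega⟩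
  · rintro ⟨hc, m, hm⟩
    have hcard : ∀ hf : (setOf p).Finite, i < hf.toFinset.card := by
      intro hf
      exact lt_of_lt_of_le hm (Nat.count_le_card hf m)
    by_contra hlt
    push_neg at hlt
    have h1 : Nat.count p (Nat.nth p i) = i := Nat.count_nth hcard
    have h2 : p (Nat.nth p i) := Nat.nth_mem i hcard
    have h3 : Nat.count p (Nat.nth p i + 1) = i + 1 := by
      rw [Nat.count_succ, h1, if_pos h2]
    have h4 : Nat.count p (Nat.nth p i + 1) ≤ Nat.count p n := Nat.count_monotone p hlt
    omega

lemma aux_meas_E {α : Type*} [MeasurableSpace α] (T : α → α) (hT : Measurable T)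
    (P : Set α) (hP : MeasurableSet P) (l : ℕ) (hl : 1 ≤ l) (nl : α → ℕ)
    (hnl : ∀ z, nl z = Nat.nth (fun n => 1 ≤ n ∧ T^[n] z ∈ P) (l - 1)) (n : ℕ) :
    MeasurableSet {z | z ∈ P ∧ n ≤ nl z} := by
  classical
  have hQm : ∀ k : ℕ, MeasurableSet {z : α | 1 ≤ k ∧ T^[k] z ∈ P} := by
    intro k
    have : {z : α | 1 ≤ k ∧ T^[k] z ∈ P} = {z : α | 1 ≤ k} ∩ T^[k] ⁻¹' P := rfl
    rw [this]
    exact (MeasurableSet.const _).inter ((hT.iterate k) hP)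
  have hcm : ∀ m : ℕ, Measurable fun z : α => Nat.count (fun k => 1 ≤ k ∧ T^[k] z ∈ P) m := by
    intro m
    induction m with
    | zero => simpa [Nat.count_zero] using measurable_const
    | succ m ih =>
      have heq : (fun z : α => Nat.count (fun k => 1 ≤ k ∧ T^[k] z ∈ P) (m + 1))
          = fun z => Nat.count (fun k => 1 ≤ k ∧ T^[k] z ∈ P) m
            + if 1 ≤ m ∧ T^[m] z ∈ P then 1 else 0 := by
        funext z; rw [Nat.count_succ]
      rw [heq]
      exact ih.add (Measurable.ite (hQm m) measurable_const measurable_const)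
  rcases Nat.eq_zero_or_pos n with hn | hn
  · subst hn
    have : {z | z ∈ P ∧ 0 ≤ nl z} = P := by ext z; simp
    rw [this]; exact hP
  · have hset : {z | z ∈ P ∧ n ≤ nl z}
        = P ∩ ({z | Nat.count (fun k => 1 ≤ k ∧ T^[k] z ∈ P) n ≤ l - 1}
          ∩ ⋃ m : ℕ, {z | l - 1 < Nat.count (fun k => 1 ≤ k ∧ T^[k] z ∈ P) m}) := by
      ext z
      simp only [Set.mem_setOf_eq, Set.mem_inter_iff, Set.mem_iUnion]
      rw [hnl z, aux_le_nth_iff _ hn]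
    rw [hset]
    refine hP.inter (MeasurableSet.inter ?_ (MeasurableSet.iUnion fun m => ?_))
    · exact measurableSet_le (hcm n) measurable_const
    · exact measurableSet_lt measurable_const (hcm m)

lemma aux_card_le {α : Type*} (f fi : α → α) (hfi : Function.LeftInverse f fi)
    (P : Set α) (l : ℕ) (hl : 1 ≤ l) (nl : α → ℕ)
    (hnl : ∀ z, nl z = Nat.nth (fun n => 1 ≤ n ∧ f^[n] z ∈ P) (l - 1))
    (z : α) (s : Finset ℕ)
    (hs : ∀ n ∈ s, fi^[n] z ∈ P ∧ n + 1 ≤ nl (fi^[n] z)) :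
    s.card ≤ l := by
  classical
  rcases s.eq_empty_or_nonempty with rfl | hne
  · simp
  set M := s.max' hne with hM
  set w := fi^[M] z with hw
  obtain ⟨hwP, hwnl⟩ := hs M (s.max'_mem hne)
  rw [hnl] at hwnl
  have hcount : Nat.count (fun k => 1 ≤ k ∧ f^[k] w ∈ P) (M + 1) ≤ l - 1 :=
    Nat.le_nth_of_count_le hwnl
  have key : ∀ m ∈ s, m < M → (1 ≤ M - m ∧ f^[M - m] w ∈ P) := by
    intro m hm hmM
    refine ⟨by omega, ?_⟩
    have h1 : fi^[M] z = fi^[M - m] (fi^[m] z) := by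
      rw [← Function.iterate_add_apply]
      congr 1
      omega
    have h2 : f^[M - m] w = fi^[m] z := by
      rw [hw, h1, hfi.iterate (M - m) (fi^[m] z)]
    rw [h2]
    exact (hs m hm).1
  have hcard : (s.erase M).card ≤ Nat.count (fun k => 1 ≤ k ∧ f^[k] w ∈ P) (M + 1) := by
    rw [Nat.count_eq_card_filter_range]
    apply Finset.card_le_card_of_injOn (fun m => M - m)
    · intro m hm
      have hmM : m ≠ M := Finset.ne_of_mem_erase hm
      have hms : m ∈ s := Finset.mem_of_mem_erase hm
      have hle : m ≤ M := s.le_max' m hms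
      have := key m hms (by omega)
      exact Finset.mem_coe.mpr (Finset.mem_filter.mpr ⟨Finset.mem_range.mpr (show M - m < M + 1 by omega), this⟩)
    · intro m1 hm1 m2 hm2 h
      have h1 : m1 ≤ M := s.le_max' m1 (Finset.mem_of_mem_erase (Finset.mem_coe.mp hm1))
      have h2 : m2 ≤ M := s.le_max' m2 (Finset.mem_of_mem_erase (Finset.mem_coe.mp hm2))
      have h' : M - m1 = M - m2 := h
      have hne1 : m1 ≠ M := Finset.ne_of_mem_erase (Finset.mem_coe.mp hm1)
      have hne2 : m2 ≠ M := Finset.ne_of_mem_erase (Finset.mem_coe.mp hm2)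
      omega
  have herase : (s.erase M).card = s.card - 1 := Finset.card_erase_of_mem (s.max'_mem hne)
  have hpos : 1 ≤ s.card := Finset.card_pos.mpr hne
  omega

/-- Integrability of the return time along fibers.
`(X, ν)` is a probability space, `Y` a standard Borel space, `μ` a probability
measure on `X × Y` projecting to `ν`, with disintegration given by the
conditional kernel `μ.condKernel` (so `σ_x = μ.condKernel x`).  `F` is an
invertible bi-measurable transformation preserving `μ`.  For `l ≥ 1`,
`nl z` is the `l`-th return time of `z` to `P` (the `l`-th smallest `n ≥ 1`
with `F^n z ∈ P`, encoded via `Nat.nth`).  `Nl x` is the supremum of those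
`n` with `σ_x(Pₙˡ(x)) > σ₀`, where `Pₙˡ(x) = {y ∈ P(x) : nl (x,y) ≥ n}`.
Then `Nl` is finite a.e. on `B` (the defining set is bounded above),
integrable on `B`, and `∫_B Nl dν < l / σ₀`. -/
theorem stmt_0
    {X Y : Type*} [MeasurableSpace X] [MeasurableSpace Y]
    [StandardBorelSpace Y] [Nonempty Y]
    (μ : Measure (X × Y)) [IsProbabilityMeasure μ]
    (ν : Measure X) (hνμ : μ.fst = ν)
    (F : (X × Y) ≃ᵐ (X × Y)) (hF : MeasurePreserving F μ μ)
    (B : Set X) (hB : MeasurableSet B) (hBpos : 0 < ν B)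
    (P : Set (X × Y)) (hPmeas : MeasurableSet P)
    (hPB : P ⊆ B ×ˢ (Set.univ : Set Y))
    (σ₀ : ℝ) (hσ₀ : 0 < σ₀)
    (hfib : ∀ᵐ x ∂ν, x ∈ B →
      ENNReal.ofReal σ₀ < μ.condKernel x {y : Y | (x, y) ∈ P})
    (l : ℕ) (hl : 1 ≤ l)
    (nl : X × Y → ℕ)
    (hnl : ∀ z, nl z = Nat.nth (fun n => 1 ≤ n ∧ (⇑F)^[n] z ∈ P) (l - 1))
    (Nl : X → ℕ)
    (hNl : ∀ x, Nl x = sSup {n : ℕ | ENNReal.ofReal σ₀ <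
      μ.condKernel x {y : Y | (x, y) ∈ P ∧ n ≤ nl (x, y)}}) :
    (∀ᵐ x ∂ν, x ∈ B → BddAbove {n : ℕ | ENNReal.ofReal σ₀ <
      μ.condKernel x {y : Y | (x, y) ∈ P ∧ n ≤ nl (x, y)}}) ∧
    IntegrableOn (fun x => (Nl x : ℝ)) B ν ∧
    ∫ x in B, (Nl x : ℝ) ∂ν < l / σ₀ := by
  classical
  have hνprob : IsProbabilityMeasure ν := by
    rw [← hνμ]; infer_instance
  set s₀ := ENNReal.ofReal σ₀ with hs₀def
  have hs₀0 : s₀ ≠ 0 := (ENNReal.ofReal_pos.mpr hσ₀).ne'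
  have hs₀top : s₀ ≠ ⊤ := ENNReal.ofReal_ne_top
  -- the sets Eₙ = {z ∈ P : n ≤ nl z}
  set E : ℕ → Set (X × Y) := fun n => {z | z ∈ P ∧ n ≤ nl z} with hE
  have hEmeas : ∀ n, MeasurableSet (E n) :=
    fun n => aux_meas_E F F.measurable P hPmeas l hl nl hnl n
  -- the fiberwise measures g n x
  set g : ℕ → X → ℝ≥0∞ := fun n x => μ.condKernel x {y | (x, y) ∈ P ∧ n ≤ nl (x, y)} with hg
  have hgmeas : ∀ n, Measurable (g n) := by
    intro n
    exact ProbabilityTheory.Kernel.measurable_kernel_prodMk_left (κ := μ.condKernel) (hEmeas n)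
  have hgint : ∀ n, ∫⁻ x, g n x ∂ν = μ (E n) := by
    intro n
    rw [← hνμ]
    exact Measure.lintegral_condKernel_mem (hEmeas n)
  -- first main estimate : ∑ₙ μ (E (n+1)) ≤ l
  set D : ℕ → Set (X × Y) := fun n => (⇑F.symm)^[n] ⁻¹' (E (n + 1)) with hD
  have hDmeas : ∀ n, MeasurableSet (D n) := fun n => (F.symm.measurable.iterate n) (hEmeas (n + 1))
  have hDμ : ∀ n, μ (D n) = μ (E (n + 1)) := by
    intro n
    exact ((MeasurePreserving.symm F hF).iterate n).measure_preimage
      (hEmeas (n + 1)).nullMeasurableSet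
  have hmult : ∀ z : X × Y, ∑' n, (D n).indicator (fun _ => (1 : ℝ≥0∞)) z ≤ l := by
    intro z
    rw [ENNReal.tsum_eq_iSup_sum]
    refine iSup_le fun s => ?_
    have hcard : (s.filter (fun n => z ∈ D n)).card ≤ l := by
      apply aux_card_le F F.symm (fun u => F.apply_symm_apply u) P l hl nl hnl z
      intro n hn
      have hz : z ∈ D n := (Finset.mem_filter.mp hn).2
      exact hz
    calc ∑ n ∈ s, (D n).indicator (fun _ => (1 : ℝ≥0∞)) z
        = ∑ n ∈ s, (if z ∈ D n then (1 : ℝ≥0∞) else 0) := by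
          refine Finset.sum_congr rfl fun n _ => ?_
          simp [Set.indicator_apply]
      _ = ((s.filter (fun n => z ∈ D n)).card : ℝ≥0∞) := by
          rw [Finset.sum_boole]
      _ ≤ (l : ℝ≥0∞) := by exact_mod_cast hcard
  have hsum : ∑' n, μ (E (n + 1)) ≤ (l : ℝ≥0∞) := by
    calc ∑' n, μ (E (n + 1)) = ∑' n, μ (D n) :=
          tsum_congr fun n => (hDμ n).symm
      _ = ∑' n, ∫⁻ z, (D n).indicator (fun _ => (1 : ℝ≥0∞)) z ∂μ := by
          refine tsum_congr fun n => ?_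
          rw [lintegral_indicator (hDmeas n)]
          simp
      _ = ∫⁻ z, ∑' n, (D n).indicator (fun _ => (1 : ℝ≥0∞)) z ∂μ :=
          (lintegral_tsum fun n => (measurable_one.indicator (hDmeas n)).aemeasurable).symm
      _ ≤ ∫⁻ _, (l : ℝ≥0∞) ∂μ := lintegral_mono hmult
      _ = (l : ℝ≥0∞) := by simp
  -- the fiberwise total G
  set G : X → ℝ≥0∞ := fun x => ∑' n, g (n + 1) x with hG
  have hGmeas : Measurable G := Measurable.ennreal_tsum fun n => hgmeas (n + 1)
  have hGint : ∫⁻ x, G x ∂ν ≤ (l : ℝ≥0∞) := by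
    calc ∫⁻ x, G x ∂ν = ∑' n, ∫⁻ x, g (n + 1) x ∂ν :=
          lintegral_tsum fun n => (hgmeas (n + 1)).aemeasurable
      _ = ∑' n, μ (E (n + 1)) := tsum_congr fun n => hgint (n + 1)
      _ ≤ (l : ℝ≥0∞) := hsum
  have hGfin : ∀ᵐ x ∂ν, G x < ⊤ :=
    ae_lt_top hGmeas (hGint.trans_lt (ENNReal.natCast_lt_top l)).ne
  -- Poincaré recurrence : a.e. point of P has nl ≥ 1
  have hPE1 : μ (P \ E 1) = 0 := by
    have hcons : Conservative ⇑F μ := hF.conservative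
    have h := hcons.ae_mem_imp_frequently_image_mem hPmeas.nullMeasurableSet
    rw [measure_eq_zero_iff_ae_notMem]
    filter_upwards [h] with z hz
    rintro ⟨hzP, hzE⟩
    apply hzE
    refine ⟨hzP, ?_⟩
    have hinf : {n : ℕ | (⇑F)^[n] z ∈ P}.Infinite :=
      Nat.frequently_atTop_iff_infinite.mp (hz hzP)
    have hinf' : {n : ℕ | 1 ≤ n ∧ (⇑F)^[n] z ∈ P}.Infinite := by
      refine Set.Infinite.mono ?_ (hinf.diff (Set.finite_singleton 0))
      rintro k ⟨hk1, hk2⟩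
      simp only [Set.mem_singleton_iff] at hk2
      exact ⟨by omega, hk1⟩
    have hmem := Nat.nth_mem_of_infinite hinf' (l - 1)
    rw [hnl z]
    exact hmem.1
  have hg10 : ∀ᵐ x ∂ν, g 1 x = g 0 x := by
    have hmeasdiff : MeasurableSet (P \ E 1) := hPmeas.diff (hEmeas 1)
    have hzero : ∫⁻ x, μ.condKernel x {y | (x, y) ∈ P \ E 1} ∂ν = 0 := by
      rw [← hνμ, Measure.lintegral_condKernel_mem hmeasdiff, hPE1]
    have h0 := (lintegral_eq_zero_iff
      (ProbabilityTheory.Kernel.measurable_kernel_prodMk_left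
        (κ := μ.condKernel) hmeasdiff)).mp hzero
    filter_upwards [h0] with x hx
    have hx' : μ.condKernel x {y | (x, y) ∈ P \ E 1} = 0 := hx
    apply le_antisymm
    · refine measure_mono fun y hy => ?_
      exact ⟨hy.1, Nat.zero_le _⟩
    · calc g 0 x ≤ g 1 x + μ.condKernel x {y | (x, y) ∈ P \ E 1} := by
            refine le_trans (measure_mono fun y hy => ?_) (measure_union_le _ _)
            by_cases h1 : 1 ≤ nl (x, y)
            · exact Or.inl ⟨hy.1, h1⟩
            · exact Or.inr ⟨hy.1, fun hc => h1 hc.2⟩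
        _ = g 1 x := by rw [hx', add_zero]
  have hfib' : ∀ᵐ x ∂ν, x ∈ B → s₀ < g 0 x := by
    filter_upwards [hfib] with x hx hxB
    have h := hx hxB
    have hset : {y | (x, y) ∈ P ∧ 0 ≤ nl (x, y)} = {y : Y | (x, y) ∈ P} := by
      ext y; simp
    show s₀ < μ.condKernel x {y | (x, y) ∈ P ∧ 0 ≤ nl (x, y)}
    rw [hset]
    exact h
  -- the main pointwise statement on B
  have hmain : ∀ᵐ x ∂ν, x ∈ B →
      (BddAbove {n : ℕ | s₀ < g n x} ∧ 1 ≤ Nl x ∧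
       ((Nl x : ℝ≥0∞) = ∑' k : ℕ, (if s₀ < g (k + 1) x then (1 : ℝ≥0∞) else 0)) ∧
       s₀ * (Nl x : ℝ≥0∞) + g 1 x ≤ G x + s₀) := by
    filter_upwards [hfib', hg10, hGfin] with x h0 h10 hfin hxB
    have h0' : s₀ < g 0 x := h0 hxB
    have h1 : s₀ < g 1 x := by rw [h10]; exact h0'
    have hanti : ∀ {m n : ℕ}, m ≤ n → g n x ≤ g m x := by
      intro m n h
      exact measure_mono fun y hy => ⟨hy.1, le_trans h hy.2⟩
    have hSfin : {n : ℕ | s₀ < g n x}.Finite := by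
      by_contra hinf
      rw [← Set.not_infinite, not_not] at hinf
      have hT : {k : ℕ | s₀ < g (k + 1) x}.Infinite := by
        intro hTfin
        apply hinf
        have hsub : {n : ℕ | s₀ < g n x}
            ⊆ insert 0 ((fun k => k + 1) '' {k | s₀ < g (k + 1) x}) := by
          intro n hn
          cases n with
          | zero => exact Set.mem_insert _ _
          | succ k => exact Set.mem_insert_of_mem _ ⟨k, hn, rfl⟩
        exact Set.Finite.subset ((hTfin.image _).insert 0) hsub
      have hGne : G x ≠ ⊤ := hfin.ne
      obtain ⟨k, hk⟩ := ENNReal.exists_nat_gt (ENNReal.div_lt_top hGne hs₀0).ne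
      obtain ⟨t, hts, htcard⟩ := hT.exists_subset_card_eq k
      have hlow : (k : ℝ≥0∞) * s₀ ≤ G x := by
        calc (k : ℝ≥0∞) * s₀ = t.card • s₀ := by rw [htcard, nsmul_eq_mul]
          _ ≤ ∑ j ∈ t, g (j + 1) x := Finset.card_nsmul_le_sum t _ s₀
              (fun j hj => (hts hj).le)
          _ ≤ G x := ENNReal.sum_le_tsum t
      have hup : G x < (k : ℝ≥0∞) * s₀ := by
        rw [← ENNReal.div_lt_iff (Or.inl hs₀0) (Or.inl hs₀top)]
        exact hk
      exact absurd hlow hup.not_ge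
    have hbdd : BddAbove {n : ℕ | s₀ < g n x} := hSfin.bddAbove
    have hNlx : Nl x = sSup {n : ℕ | s₀ < g n x} := hNl x
    have hNlmem : Nl x ∈ {n : ℕ | s₀ < g n x} := by
      rw [hNlx]
      exact Nat.sSup_mem ⟨0, h0'⟩ hbdd
    have hNl1 : 1 ≤ Nl x := by
      rw [hNlx]
      exact le_csSup hbdd h1
    have hiff : ∀ k : ℕ, (s₀ < g (k + 1) x ↔ k + 1 ≤ Nl x) := by
      intro k
      constructor
      · intro h
        rw [hNlx]
        exact le_csSup hbdd h
      · intro h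
        exact lt_of_lt_of_le hNlmem (hanti h)
    have hge : ∀ n : ℕ, 1 ≤ n → n ≤ Nl x → s₀ ≤ g n x :=
      fun n _ h => (lt_of_lt_of_le hNlmem (hanti h)).le
    refine ⟨hbdd, hNl1, ?_, ?_⟩
    · -- counting formula
      have hterm : ∀ k : ℕ, (if s₀ < g (k + 1) x then (1 : ℝ≥0∞) else 0)
          = if k ∈ Finset.range (Nl x) then (1 : ℝ≥0∞) else 0 := by
        intro k
        rcases le_or_gt (k + 1) (Nl x) with h | h
        · rw [if_pos ((hiff k).mpr h), if_pos (Finset.mem_range.mpr (by omega))]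
        · have hc1 : ¬ s₀ < g (k + 1) x := fun hc => by
            have := (hiff k).mp hc; omega
          have hc2 : k ∉ Finset.range (Nl x) := by
            simp only [Finset.mem_range]; omega
          rw [if_neg hc1, if_neg hc2]
      calc ((Nl x : ℝ≥0∞))
          = ∑ k ∈ Finset.range (Nl x), (1 : ℝ≥0∞) := by
            rw [Finset.sum_const, Finset.card_range, nsmul_eq_mul, mul_one]
        _ = ∑ k ∈ Finset.range (Nl x), (if k ∈ Finset.range (Nl x) then (1 : ℝ≥0∞) else 0) :=
            (Finset.sum_congr rfl fun k hk => by rw [if_pos hk]).symm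
        _ = ∑' k : ℕ, (if k ∈ Finset.range (Nl x) then (1 : ℝ≥0∞) else 0) :=
            (tsum_eq_sum fun k hk => if_neg hk).symm
        _ = ∑' k : ℕ, (if s₀ < g (k + 1) x then (1 : ℝ≥0∞) else 0) :=
            tsum_congr fun k => (hterm k).symm
    · -- the key pointwise inequality
      set K := Nl x with hK
      have hcast : (K : ℝ≥0∞) = ((K - 1 : ℕ) : ℝ≥0∞) + 1 := by
        rw [← Nat.cast_one (R := ℝ≥0∞), ← Nat.cast_add]
        congr 1
        omega
      have hKsplit : ∑ m ∈ Finset.range K, g (m + 1) x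
          = ∑ m ∈ Finset.range (K - 1), g (m + 1 + 1) x + g 1 x := by
        conv_lhs => rw [show K = (K - 1) + 1 by omega]
        rw [Finset.sum_range_succ' (fun m => g (m + 1) x) (K - 1)]
      have hlow : ((K - 1 : ℕ) : ℝ≥0∞) * s₀ ≤ ∑ m ∈ Finset.range (K - 1), g (m + 1 + 1) x := by
        calc ((K - 1 : ℕ) : ℝ≥0∞) * s₀ = (Finset.range (K - 1)).card • s₀ := by
              rw [Finset.card_range, nsmul_eq_mul]
          _ ≤ ∑ m ∈ Finset.range (K - 1), g (m + 1 + 1) x := by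
              refine Finset.card_nsmul_le_sum _ _ _ fun m hm => ?_
              have hm' := Finset.mem_range.mp hm
              exact hge (m + 2) (by omega) (by omega)
      calc s₀ * (K : ℝ≥0∞) + g 1 x
          = (((K - 1 : ℕ) : ℝ≥0∞) * s₀ + g 1 x) + s₀ := by rw [hcast]; ring
        _ ≤ (∑ m ∈ Finset.range (K - 1), g (m + 1 + 1) x + g 1 x) + s₀ := by gcongr
        _ = ∑ m ∈ Finset.range K, g (m + 1) x + s₀ := by rw [hKsplit]
        _ ≤ G x + s₀ := by
            gcongr
            exact ENNReal.sum_le_tsum _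
  -- measurable representative of Nl on B
  set T : X → ℝ≥0∞ := fun x => ∑' k : ℕ, (if s₀ < g (k + 1) x then (1 : ℝ≥0∞) else 0) with hT
  have hTmeas : Measurable T :=
    Measurable.ennreal_tsum fun k =>
      Measurable.ite (measurableSet_lt measurable_const (hgmeas (k + 1)))
        measurable_const measurable_const
  have haeT : (fun x => (Nl x : ℝ≥0∞)) =ᵐ[ν.restrict B] T := by
    refine (ae_restrict_iff' hB).mpr ?_
    filter_upwards [hmain] with x hx hxB
    exact (hx hxB).2.2.1
  have haem : AEMeasurable (fun x => (Nl x : ℝ≥0∞)) (ν.restrict B) :=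
    hTmeas.aemeasurable.congr haeT.symm
  set L := ∫⁻ x in B, (Nl x : ℝ≥0∞) ∂ν with hL
  -- the integrated inequality
  have hineq1 : ∫⁻ x in B, (s₀ * (Nl x : ℝ≥0∞) + g 1 x) ∂ν
      ≤ ∫⁻ x in B, (G x + s₀) ∂ν := by
    refine lintegral_mono_ae ?_
    refine (ae_restrict_iff' hB).mpr ?_
    filter_upwards [hmain] with x hx hxB
    exact (hx hxB).2.2.2
  have hlhs : ∫⁻ x in B, (s₀ * (Nl x : ℝ≥0∞) + g 1 x) ∂ν
      = s₀ * L + ∫⁻ x in B, g 1 x ∂ν := by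
    rw [lintegral_add_left' (haem.const_mul _), lintegral_const_mul' _ _ hs₀top]
  have hrhs : ∫⁻ x in B, (G x + s₀) ∂ν ≤ (l : ℝ≥0∞) + s₀ * ν B := by
    rw [lintegral_add_left hGmeas, setLIntegral_const]
    gcongr
    exact le_trans (setLIntegral_le_lintegral _ _) hGint
  have hg1low : s₀ * ν B < ∫⁻ x in B, g 1 x ∂ν := by
    have hstrict := setLIntegral_strict_mono (f := fun _ => s₀) hB hBpos.ne' (hgmeas 1)
      (by rw [setLIntegral_const]
          exact ENNReal.mul_ne_top hs₀top (measure_ne_top ν B)) ?_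
    · rwa [setLIntegral_const] at hstrict
    · filter_upwards [hfib', hg10] with x h0 h10 hxB
      rw [← h10] at h0
      exact h0 hxB
  have hA1A2 : s₀ * L + ∫⁻ x in B, g 1 x ∂ν ≤ (l : ℝ≥0∞) + s₀ * ν B := by
    rw [← hlhs]
    exact le_trans hineq1 hrhs
  have hC : s₀ * ν B ≠ ⊤ := ENNReal.mul_ne_top hs₀top (measure_ne_top ν B)
  have hRfin : (l : ℝ≥0∞) + s₀ * ν B ≠ ⊤ :=
    ENNReal.add_ne_top.mpr ⟨ENNReal.natCast_ne_top l, hC⟩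
  have hA1 : s₀ * L ≠ ⊤ :=
    ne_top_of_le_ne_top hRfin (le_trans le_self_add hA1A2)
  have hfinal : s₀ * L < (l : ℝ≥0∞) := by
    have h1 : s₀ * L + s₀ * ν B < (l : ℝ≥0∞) + s₀ * ν B :=
      lt_of_lt_of_le (ENNReal.add_lt_add_left hA1 hg1low) hA1A2
    exact (ENNReal.add_lt_add_iff_right hC).mp h1
  have hLlt : L < (l : ℝ≥0∞) / s₀ := by
    rw [ENNReal.lt_div_iff_mul_lt (Or.inl hs₀0) (Or.inl hs₀top), mul_comm]
    exact hfinal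
  have hdivfin : (l : ℝ≥0∞) / s₀ < ⊤ := ENNReal.div_lt_top (ENNReal.natCast_ne_top l) hs₀0
  have hLne : L ≠ ⊤ := (hLlt.trans hdivfin).ne
  -- integrability
  have hInt : IntegrableOn (fun x => (Nl x : ℝ)) B ν := by
    have h1 : Integrable (fun x => ((Nl x : ℝ≥0∞)).toReal) (ν.restrict B) :=
      integrable_toReal_of_lintegral_ne_top haem hLne
    have h2 : (fun x => ((Nl x : ℝ≥0∞)).toReal) = fun x => (Nl x : ℝ) :=
      funext fun x => ENNReal.toReal_natCast _
    rwa [h2] at h1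
  refine ⟨?_, hInt, ?_⟩
  · filter_upwards [hmain] with x hx hxB
    exact (hx hxB).1
  · have hint : ∫ x in B, (Nl x : ℝ) ∂ν = L.toReal := by
      rw [integral_eq_lintegral_of_nonneg_ae
        (Filter.Eventually.of_forall fun x => by positivity) hInt.1]
      congr 1
      refine lintegral_congr fun x => ?_
      rw [ENNReal.ofReal_natCast]
    rw [hint]
    have h1 : L.toReal < ((l : ℝ≥0∞) / s₀).toReal :=
      ENNReal.toReal_strict_mono hdivfin.ne hLlt
    rwa [ENNReal.toReal_div, ENNReal.toReal_natCast, hs₀def,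
      ENNReal.toReal_ofReal hσ₀.le] at h1
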